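/- arXiv:math/0610476 — 4 statements merged into one kernel-verified Lean document; each statement's English description precedes it below -/
import Mathlib

section
/- The map f : G₀ → Gτ, x ↦ (x,1)τ, induces a bijection from the set of conjugacy classes of G₀ onto the set of conjugacy classes of G̃ that are contained in the coset Gτ; that is, x and y are conjugate in G₀ if and only if (x,1)τ and (y,1)τ are conjugate in G̃, and every conjugacy class of G̃ contained in Gτ contains an element of the form (x,1)τ. -/
open SemidirectProduct

/-- The swap automorphism of `G₀ × G₀` (the automorphism `τ` of `G = G₀ × G₀`). -/
def swapAut (G₀ : Type*) [Group G₀] : MulAut (G₀ × G₀) :=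
  (MulEquiv.prodComm : (G₀ × G₀) ≃* (G₀ × G₀))

lemma swapAut_sq (G₀ : Type*) [Group G₀] : swapAut G₀ ^ 2 = 1 := by
  ext x <;> simp [pow_succ, swapAut]

/-- The homomorphism from the cyclic group of order two (written multiplicatively as
`Multiplicative (ZMod 2)`) determined by an involution. -/
def involHom {M : Type*} [Group M] (a : M) (ha : a ^ 2 = 1) :
    Multiplicative (ZMod 2) →* M :=
  MonoidHom.mk' (fun x => a ^ (Multiplicative.toAdd x).val)
    (fun x y => by
      show a ^ (Multiplicative.toAdd (x * y)).val = _
      rw [toAdd_mul, ZMod.val_add, ← pow_eq_pow_mod _ ha, pow_add])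

/-- The action of the cyclic group of order two on `G₀ × G₀` by swapping the factors. -/
def swapHom (G₀ : Type*) [Group G₀] : Multiplicative (ZMod 2) →* MulAut (G₀ × G₀) :=
  involHom (swapAut G₀) (swapAut_sq G₀)

/-- `G̃ = G ⋊ ⟨τ⟩`, the semidirect product of `G = G₀ × G₀` with a cyclic group of order
two whose generator `τ` acts by the swap automorphism. -/
abbrev Gt (G₀ : Type*) [Group G₀] := (G₀ × G₀) ⋊[swapHom G₀] Multiplicative (ZMod 2)

/-- The element `τ` of `G̃`. -/
def tau (G₀ : Type*) [Group G₀] : Gt G₀ := inr (Multiplicative.ofAdd 1)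


section Helpers

variable {G₀ : Type*} [Group G₀]

private lemma swapHom_one' (p : G₀ × G₀) : swapHom G₀ 1 p = p := by
  simp [swapHom, involHom, swapAut]

private lemma swapHom_tau' (p : G₀ × G₀) :
    swapHom G₀ (Multiplicative.ofAdd 1) p = p.swap := by
  show (swapAut G₀ ^ (1 : ZMod 2).val) p = p.swap
  norm_num [ZMod.val_one, swapAut]

private lemma two_cases' (s : Multiplicative (ZMod 2)) :
    s = 1 ∨ s = Multiplicative.ofAdd 1 := by
  revert s; decide

end Helpers

/-- The map `f : G₀ → Gτ`, `x ↦ (x,1)τ`, induces a bijection from the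
conjugacy classes of `G₀` onto the conjugacy classes of `G̃` contained in the coset `Gτ`:
`x` and `y` are conjugate in `G₀` iff `(x,1)τ` and `(y,1)τ` are conjugate in `G̃`, and
every conjugacy class of `G̃` contained in `Gτ` contains an element of the form `(x,1)τ`. -/
theorem classes_of_G0_biject_with_classes_in_coset {G₀ : Type*} [Group G₀] :
    (∀ x y : G₀, IsConj x y ↔ IsConj (inl (x, 1) * tau G₀) (inl (y, 1) * tau G₀)) ∧
    ∀ z : Gt G₀, z.right = Multiplicative.ofAdd 1 →
      ∃ x : G₀, IsConj z (inl (x, 1) * tau G₀) := by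
  constructor
  · intro x y
    constructor
    · intro h
      rw [isConj_iff] at h
      obtain ⟨c, hc⟩ := h
      rw [mul_inv_eq_iff_eq_mul] at hc
      rw [isConj_iff]
      refine ⟨inl (c, c), ?_⟩
      rw [mul_inv_eq_iff_eq_mul]
      ext <;> simp [tau, swapHom_tau', swapHom_one', hc]
    · intro h
      rw [isConj_iff] at h ⊢
      obtain ⟨u, hu⟩ := h
      rw [mul_inv_eq_iff_eq_mul] at hu
      obtain ⟨⟨a, b⟩, s⟩ := u
      have hs := two_cases' s
      have h1 := congrArg (fun z : Gt G₀ => z.left.1) hu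
      have h2 := congrArg (fun z : Gt G₀ => z.left.2) hu
      rcases hs with rfl | rfl
      · simp [tau, swapHom_tau', swapHom_one'] at h1 h2
        subst h2
        exact ⟨b, by rw [mul_inv_eq_iff_eq_mul]; exact h1⟩
      · simp [tau, swapHom_tau', swapHom_one'] at h1 h2
        subst h1
        exact ⟨b, by rw [mul_inv_eq_iff_eq_mul]; exact h2⟩
  · intro z hz
    obtain ⟨⟨g₁, g₂⟩, s⟩ := z
    simp only at hz
    subst hz
    refine ⟨g₁ * g₂, ?_⟩
    rw [isConj_iff]
    refine ⟨inl (1, g₂⁻¹), ?_⟩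
    rw [mul_inv_eq_iff_eq_mul]
    ext <;> simp [tau, swapHom_tau', swapHom_one', mk_eq_inl_mul_inr]
end

section
/- For every real number q with q > 1: if P' is a 3×3 real upper triangular matrix with all diagonal entries equal to 1 and Λ' is a 3×3 real diagonal matrix such that P'ᵀ Λ' P' = Ω, where Ω = [[1, q²−1, 1], [q²−1, q⁶−q², −q⁶+q⁴], [1, −q⁶+q⁴, q⁸]], then P' = [[1, q²−1, 1], [0, 1, −1], [0, 0, 1]] and Λ' = diag(1, q⁶−q⁴+q²−1, q⁸−q⁶+q⁴−q²). -/
open Matrix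

/-- Uniqueness in Lusztig's algorithm for the Suzuki groups `²B₂(q²)`:
for `q > 1`, if `P'` is unipotent upper triangular and `Λ'` is diagonal with
`P'ᵀ Λ' P' = Ω`, then `P'` and `Λ'` are the matrices of Statement 13. -/
theorem suzuki_lusztig_matrix_uniqueness (q : ℝ) (hq : 1 < q)
    (P' Λ' : Matrix (Fin 3) (Fin 3) ℝ)
    (hP'upper : ∀ i j : Fin 3, j < i → P' i j = 0)
    (hP'diag : ∀ i : Fin 3, P' i i = 1)
    (hΛ'diag : ∀ i j : Fin 3, i ≠ j → Λ' i j = 0)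
    (h : P'ᵀ * Λ' * P' =
      !![1, q ^ 2 - 1, 1;
         q ^ 2 - 1, q ^ 6 - q ^ 2, -q ^ 6 + q ^ 4;
         1, -q ^ 6 + q ^ 4, q ^ 8]) :
    P' = !![1, q ^ 2 - 1, 1; 0, 1, -1; 0, 0, 1] ∧
    Λ' = Matrix.diagonal ![1, q ^ 6 - q ^ 4 + q ^ 2 - 1, q ^ 8 - q ^ 6 + q ^ 4 - q ^ 2] := by
  have p10 : P' 1 0 = 0 := hP'upper 1 0 (by decide)
  have p20 : P' 2 0 = 0 := hP'upper 2 0 (by decide)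
  have p21 : P' 2 1 = 0 := hP'upper 2 1 (by decide)
  have p00 : P' 0 0 = 1 := hP'diag 0
  have p11 : P' 1 1 = 1 := hP'diag 1
  have p22 : P' 2 2 = 1 := hP'diag 2
  have l01 : Λ' 0 1 = 0 := hΛ'diag 0 1 (by decide)
  have l02 : Λ' 0 2 = 0 := hΛ'diag 0 2 (by decide)
  have l10 : Λ' 1 0 = 0 := hΛ'diag 1 0 (by decide)
  have l12 : Λ' 1 2 = 0 := hΛ'diag 1 2 (by decide)
  have l20 : Λ' 2 0 = 0 := hΛ'diag 2 0 (by decide)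
  have l21 : Λ' 2 1 = 0 := hΛ'diag 2 1 (by decide)
  have h00 := congrFun (congrFun h 0) 0
  have h01 := congrFun (congrFun h 0) 1
  have h02 := congrFun (congrFun h 0) 2
  have h11 := congrFun (congrFun h 1) 1
  have h12 := congrFun (congrFun h 1) 2
  have h22 := congrFun (congrFun h 2) 2
  simp only [Matrix.mul_apply, Fin.sum_univ_three, Matrix.transpose_apply,
    p10, p20, p21, p00, p11, p22, l01, l02, l10, l12, l20, l21,
    Matrix.cons_val', Matrix.cons_val_zero, Matrix.cons_val_one, Matrix.head_cons,
    Matrix.empty_val', Matrix.cons_val_fin_one, Matrix.head_fin_const,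
    Matrix.cons_val_two, Matrix.tail_cons, Matrix.of_apply,
    mul_zero, zero_mul, add_zero, zero_add, mul_one, one_mul] at h00 h01 h02 h11 h12 h22
  -- h00 : Λ' 0 0 = 1
  have d0 : Λ' 0 0 = 1 := by linarith [h00]
  have a : P' 0 1 = q ^ 2 - 1 := by
    rw [d0] at h01; linarith
  have b : P' 0 2 = 1 := by
    rw [d0] at h02; linarith
  have d1 : Λ' 1 1 = q ^ 6 - q ^ 4 + q ^ 2 - 1 := by
    rw [d0, a] at h11; linear_combination h11
  have hq0 : (0:ℝ) < q := lt_trans zero_lt_one hq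
  have hq2 : (1:ℝ) < q ^ 2 := by nlinarith
  have d1pos : (0:ℝ) < q ^ 6 - q ^ 4 + q ^ 2 - 1 := by
    nlinarith [mul_pos (sub_pos.mpr hq2) (by positivity : (0:ℝ) < q ^ 4 + 1)]
  have c : P' 1 2 = -1 := by
    rw [d0, a, b, d1] at h12
    have key : (q ^ 6 - q ^ 4 + q ^ 2 - 1) * (P' 1 2 + 1) = 0 := by linear_combination h12
    rcases mul_eq_zero.mp key with h' | h'
    · linarith
    · linarith
  have d2 : Λ' 2 2 = q ^ 8 - q ^ 6 + q ^ 4 - q ^ 2 := by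
    rw [d0, b, c, d1] at h22; linear_combination h22
  constructor
  · ext i j
    fin_cases i <;> fin_cases j <;>
      simp [p10, p20, p21, p00, p11, p22, a, b, c, Matrix.vecHead, Matrix.vecTail]
  · ext i j
    fin_cases i <;> fin_cases j <;>
      simp [Matrix.diagonal, l01, l02, l10, l12, l20, l21, d0, d1, d2]
end

section
/- For every real number q, the 4×4 real matrices P = [[1, 1−q², q⁴−1, 1], [0, 1, −1, 1], [0, 0, 1, −1], [0, 0, 0, 1]] and Λ = diag(1, p₁(q), q²·p₁(q), q⁴·p₁(q)), where p₁(q) = (q⁴−1)(q⁴−q²+1), satisfy Pᵀ Λ P = Ω, where Ω is the symmetric 4×4 matrix [[1, 1−q², q⁴−1, 1], [1−q², q⁸−q⁶+q⁴−q², −q⁸+q⁴, q⁸−q⁶], [q⁴−1, −q⁸+q⁴, q¹⁰+q⁸−q⁶−q⁴, −q¹⁰+q⁶], [1, q⁸−q⁶, −q¹⁰+q⁶, q¹²]]. -/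
open Matrix

/-- For Lusztig's algorithm for the Ree groups `²G₂(q²)`:
the matrices `P` (unipotent upper triangular), `Λ = diag(1, p₁(q), q²p₁(q), q⁴p₁(q))`
with `p₁(q) = (q⁴ − 1)(q⁴ − q² + 1)`, and `Ω` satisfy `Pᵀ Λ P = Ω`, as a polynomial
identity in the real variable `q`. -/
theorem ree_g2_lusztig_matrix_identity (q : ℝ) :
    (!![1, 1 - q ^ 2, q ^ 4 - 1, 1;
        0, 1, -1, 1;
        0, 0, 1, -1;
        0, 0, 0, 1] : Matrix (Fin 4) (Fin 4) ℝ)ᵀ *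
      Matrix.diagonal
        ![1, (q ^ 4 - 1) * (q ^ 4 - q ^ 2 + 1),
          q ^ 2 * ((q ^ 4 - 1) * (q ^ 4 - q ^ 2 + 1)),
          q ^ 4 * ((q ^ 4 - 1) * (q ^ 4 - q ^ 2 + 1))] *
      !![1, 1 - q ^ 2, q ^ 4 - 1, 1;
         0, 1, -1, 1;
         0, 0, 1, -1;
         0, 0, 0, 1] =
    !![1, 1 - q ^ 2, q ^ 4 - 1, 1;
       1 - q ^ 2, q ^ 8 - q ^ 6 + q ^ 4 - q ^ 2, -q ^ 8 + q ^ 4, q ^ 8 - q ^ 6;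
       q ^ 4 - 1, -q ^ 8 + q ^ 4, q ^ 10 + q ^ 8 - q ^ 6 - q ^ 4, -q ^ 10 + q ^ 6;
       1, q ^ 8 - q ^ 6, -q ^ 10 + q ^ 6, q ^ 12] := by
  have : (Matrix.diagonal ![1, (q ^ 4 - 1) * (q ^ 4 - q ^ 2 + 1), q ^ 2 * ((q ^ 4 - 1) * (q ^ 4 - q ^ 2 + 1)), q ^ 4 * ((q ^ 4 - 1) * (q ^ 4 - q ^ 2 + 1))] : Matrix (Fin 4) (Fin 4) ℝ) = !![1,0,0,0; 0,(q ^ 4 - 1) * (q ^ 4 - q ^ 2 + 1),0,0; 0,0,q ^ 2 * ((q ^ 4 - 1) * (q ^ 4 - q ^ 2 + 1)),0; 0,0,0,q ^ 4 * ((q ^ 4 - 1) * (q ^ 4 - q ^ 2 + 1))] := by ext i j; fin_cases i <;> fin_cases j <;> simp [Matrix.diagonal, Matrix.vecHead, Matrix.vecTail]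
  rw [this]
  ext i j
  fin_cases i <;> fin_cases j <;> simp [Matrix.mul_apply, Fin.sum_univ_succ] <;> ring
end

section
/- For every real number q with q > 1: if P' is a 4×4 real upper triangular matrix with all diagonal entries equal to 1 and Λ' is a 4×4 real diagonal matrix such that P'ᵀ Λ' P' = Ω, where Ω = [[1, 1−q², q⁴−1, 1], [1−q², q⁸−q⁶+q⁴−q², −q⁸+q⁴, q⁸−q⁶], [q⁴−1, −q⁸+q⁴, q¹⁰+q⁸−q⁶−q⁴, −q¹⁰+q⁶], [1, q⁸−q⁶, −q¹⁰+q⁶, q¹²]], then P' = [[1, 1−q², q⁴−1, 1], [0, 1, −1, 1], [0, 0, 1, −1], [0, 0, 0, 1]] and Λ' = diag(1, p₁(q), q²·p₁(q), q⁴·p₁(q)) with p₁(q) = (q⁴−1)(q⁴−q²+1). -/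
open Matrix

/-- Uniqueness in Lusztig's algorithm for the Ree groups `²G₂(q²)`:
for `q > 1`, if `P'` is unipotent upper triangular and `Λ'` is diagonal with
`P'ᵀ Λ' P' = Ω`, then `P'` and `Λ'` are the matrices of Statement 15. -/
theorem ree_g2_lusztig_matrix_uniqueness (q : ℝ) (hq : 1 < q)
    (P' Λ' : Matrix (Fin 4) (Fin 4) ℝ)
    (hP'upper : ∀ i j : Fin 4, j < i → P' i j = 0)
    (hP'diag : ∀ i : Fin 4, P' i i = 1)
    (hΛ'diag : ∀ i j : Fin 4, i ≠ j → Λ' i j = 0)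
    (h : P'ᵀ * Λ' * P' =
      !![1, 1 - q ^ 2, q ^ 4 - 1, 1;
         1 - q ^ 2, q ^ 8 - q ^ 6 + q ^ 4 - q ^ 2, -q ^ 8 + q ^ 4, q ^ 8 - q ^ 6;
         q ^ 4 - 1, -q ^ 8 + q ^ 4, q ^ 10 + q ^ 8 - q ^ 6 - q ^ 4, -q ^ 10 + q ^ 6;
         1, q ^ 8 - q ^ 6, -q ^ 10 + q ^ 6, q ^ 12]) :
    P' = !![1, 1 - q ^ 2, q ^ 4 - 1, 1;
            0, 1, -1, 1;
            0, 0, 1, -1;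
            0, 0, 0, 1] ∧
    Λ' = Matrix.diagonal
        ![1, (q ^ 4 - 1) * (q ^ 4 - q ^ 2 + 1),
          q ^ 2 * ((q ^ 4 - 1) * (q ^ 4 - q ^ 2 + 1)),
          q ^ 4 * ((q ^ 4 - 1) * (q ^ 4 - q ^ 2 + 1))] := by
  have z10 : P' 1 0 = 0 := hP'upper 1 0 (by decide)
  have z20 : P' 2 0 = 0 := hP'upper 2 0 (by decide)
  have z21 : P' 2 1 = 0 := hP'upper 2 1 (by decide)
  have z30 : P' 3 0 = 0 := hP'upper 3 0 (by decide)
  have z31 : P' 3 1 = 0 := hP'upper 3 1 (by decide)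
  have z32 : P' 3 2 = 0 := hP'upper 3 2 (by decide)
  have hΛ : Λ' = Matrix.diagonal (fun i => Λ' i i) := by
    ext i j
    by_cases hij : i = j
    · subst hij; simp
    · simp [Matrix.diagonal, hij, hΛ'diag i j hij]
  rw [hΛ] at h
  have E00 := congrFun (congrFun h 0) 0
  simp [Matrix.mul_apply, Matrix.diagonal, Fin.sum_univ_four, z10, z20, z21, z30, z31, z32, hP'diag] at E00
  have E01 := congrFun (congrFun h 0) 1
  simp [Matrix.mul_apply, Matrix.diagonal, Fin.sum_univ_four, z10, z20, z21, z30, z31, z32, hP'diag] at E01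
  have E02 := congrFun (congrFun h 0) 2
  simp [Matrix.mul_apply, Matrix.diagonal, Fin.sum_univ_four, z10, z20, z21, z30, z31, z32, hP'diag] at E02
  have E03 := congrFun (congrFun h 0) 3
  simp [Matrix.mul_apply, Matrix.diagonal, Fin.sum_univ_four, z10, z20, z21, z30, z31, z32, hP'diag] at E03
  have E11 := congrFun (congrFun h 1) 1
  simp [Matrix.mul_apply, Matrix.diagonal, Fin.sum_univ_four, z10, z20, z21, z30, z31, z32, hP'diag] at E11
  have E12 := congrFun (congrFun h 1) 2
  simp [Matrix.mul_apply, Matrix.diagonal, Fin.sum_univ_four, z10, z20, z21, z30, z31, z32, hP'diag] at E12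
  have E13 := congrFun (congrFun h 1) 3
  simp [Matrix.mul_apply, Matrix.diagonal, Fin.sum_univ_four, z10, z20, z21, z30, z31, z32, hP'diag] at E13
  have E22 := congrFun (congrFun h 2) 2
  simp [Matrix.mul_apply, Matrix.diagonal, Fin.sum_univ_four, z10, z20, z21, z30, z31, z32, hP'diag] at E22
  have E23 := congrFun (congrFun h 2) 3
  simp [Matrix.mul_apply, Matrix.diagonal, Fin.sum_univ_four, z10, z20, z21, z30, z31, z32, hP'diag] at E23
  have E33 := congrFun (congrFun h 3) 3
  simp [Matrix.mul_apply, Matrix.diagonal, Fin.sum_univ_four, z10, z20, z21, z30, z31, z32, hP'diag] at E33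
  -- positivity of the pivot
  have hq2 : 1 < q ^ 2 := by nlinarith
  have hq4 : 1 < q ^ 4 := by nlinarith
  have hppos : 0 < (q ^ 4 - 1) * (q ^ 4 - q ^ 2 + 1) :=
    mul_pos (by linarith) (by nlinarith)
  have hp : (q ^ 4 - 1) * (q ^ 4 - q ^ 2 + 1) ≠ 0 := ne_of_gt hppos
  have hp2 : q ^ 2 * ((q ^ 4 - 1) * (q ^ 4 - q ^ 2 + 1)) ≠ 0 := by positivity
  have ha : P' 0 1 = 1 - q ^ 2 := by linear_combination E01 - P' 0 1 * E00
  have hb : P' 0 2 = q ^ 4 - 1 := by linear_combination E02 - P' 0 2 * E00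
  have hc : P' 0 3 = 1 := by linear_combination E03 - P' 0 3 * E00
  rw [E00, ha] at E11 E12 E13
  have hd1 : Λ' 1 1 = (q ^ 4 - 1) * (q ^ 4 - q ^ 2 + 1) := by linear_combination E11
  rw [hb] at E12 E22 E23
  rw [hc] at E13 E23 E33
  rw [hd1] at E12 E13 E22 E23 E33
  have he : P' 1 2 = -1 := by
    refine mul_left_cancel₀ hp ?_
    linear_combination E12
  have hf : P' 1 3 = 1 := by
    refine mul_left_cancel₀ hp ?_
    linear_combination E13
  rw [E00] at E22 E23 E33
  rw [he] at E22 E23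
  rw [hf] at E23 E33
  have hd2 : Λ' 2 2 = q ^ 2 * ((q ^ 4 - 1) * (q ^ 4 - q ^ 2 + 1)) := by linear_combination E22
  rw [hd2] at E23 E33
  have hg : P' 2 3 = -1 := by
    refine mul_left_cancel₀ hp2 ?_
    linear_combination E23
  rw [hg] at E33
  have hd3 : Λ' 3 3 = q ^ 4 * ((q ^ 4 - 1) * (q ^ 4 - q ^ 2 + 1)) := by linear_combination E33
  constructor
  · ext i j
    fin_cases i <;> fin_cases j <;>
      simp [Matrix.vecHead, Matrix.vecTail, ha, hb, hc, he, hf, hg, hP'diag, z10, z20, z21, z30, z31, z32]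
  · have l01 : Λ' 0 1 = 0 := hΛ'diag 0 1 (by decide)
    have l02 : Λ' 0 2 = 0 := hΛ'diag 0 2 (by decide)
    have l03 : Λ' 0 3 = 0 := hΛ'diag 0 3 (by decide)
    have l10 : Λ' 1 0 = 0 := hΛ'diag 1 0 (by decide)
    have l12 : Λ' 1 2 = 0 := hΛ'diag 1 2 (by decide)
    have l13 : Λ' 1 3 = 0 := hΛ'diag 1 3 (by decide)
    have l20 : Λ' 2 0 = 0 := hΛ'diag 2 0 (by decide)
    have l21 : Λ' 2 1 = 0 := hΛ'diag 2 1 (by decide)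
    have l23 : Λ' 2 3 = 0 := hΛ'diag 2 3 (by decide)
    have l30 : Λ' 3 0 = 0 := hΛ'diag 3 0 (by decide)
    have l31 : Λ' 3 1 = 0 := hΛ'diag 3 1 (by decide)
    have l32 : Λ' 3 2 = 0 := hΛ'diag 3 2 (by decide)
    ext i j
    fin_cases i <;> fin_cases j <;>
      simp [Matrix.diagonal, Matrix.vecHead, Matrix.vecTail, E00, hd1, hd2, hd3,
        l01, l02, l03, l10, l12, l13, l20, l21, l23, l30, l31, l32]
end
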